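/- For every λ > 0, the map κ_λ vanishes identically (i.e. κ_λ(X,Y) = 0 for all X, Y ∈ 𝔨) if and only if λ = 1; equivalently, the left invariant CR structure (H, J_λ) on SU(2) is spherical exactly for λ = 1. -/

import Mathlib

open Matrix Complex

noncomputable section
set_option maxHeartbeats 1000000

/-- The 3×3 matrix J with J₀₂ = J₁₁ = J₂₀ = 1 and all other entries 0. -/
def Jm : Matrix (Fin 3) (Fin 3) ℂ := !![0,0,1;0,1,0;1,0,0]

/-- The real Lie algebra 𝔤 = su(2,1) = {A : Aᴴ·J + J·A = 0, tr A = 0}. -/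
def su21 : Set (Matrix (Fin 3) (Fin 3) ℂ) :=
  {A | Aᴴ * Jm + Jm * A = 0 ∧ A.trace = 0}

/-- The real Lie algebra 𝔨 = su(2). -/
def su2 : Set (Matrix (Fin 2) (Fin 2) ℂ) :=
  {X | Xᴴ = -X ∧ X.trace = 0}

/-- The element X(t,z) of su(2), with rows (i·t, -conj z) and (z, -i·t). -/
def Xk (t : ℝ) (z : ℂ) : Matrix (Fin 2) (Fin 2) ℂ :=
  !![Complex.I * t, -(starRingEnd ℂ) z; z, -(Complex.I * t)]

/-- The matrix φ_λ(X(t,u+iv)) from Theorem 3.3 of the paper. -/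
def phiE (l t u v : ℝ) : Matrix (Fin 3) (Fin 3) ℂ :=
  !![(((1+l^2)/(4*l) : ℝ) : ℂ) * (Complex.I * t),
     -((((5-3*l^2)/(4*Real.sqrt l)) : ℝ) : ℂ) * u
       - ((((3-5*l^2)/(4*l*Real.sqrt l)) : ℝ) : ℂ) * (Complex.I * v),
     ((((-15+34*l^2-15*l^4)/(16*l^2)) : ℝ) : ℂ) * (Complex.I * t);
     ((Real.sqrt l : ℝ) : ℂ) * u + (((1/Real.sqrt l) : ℝ) : ℂ) * (Complex.I * v),
     -((((1+l^2)/(2*l)) : ℝ) : ℂ) * (Complex.I * t),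
     ((((5-3*l^2)/(4*Real.sqrt l)) : ℝ) : ℂ) * u
       - ((((3-5*l^2)/(4*l*Real.sqrt l)) : ℝ) : ℂ) * (Complex.I * v);
     Complex.I * t,
     -((Real.sqrt l : ℝ) : ℂ) * u + (((1/Real.sqrt l) : ℝ) : ℂ) * (Complex.I * v),
     (((1+l^2)/(4*l) : ℝ) : ℂ) * (Complex.I * t)]

/-- The ℝ-linear map φ_λ, written as a map on 2×2 matrices: for X ∈ su(2) we have
X = X(t,z) with t = (X₀₀).im and z = X₁₀, and φ_λ(X(t,u+iv)) = `phiE l t u v`. -/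
def phiMap (l : ℝ) (X : Matrix (Fin 2) (Fin 2) ℂ) : Matrix (Fin 3) (Fin 3) ℂ :=
  phiE l (X 0 0).im (X 1 0).re (X 1 0).im

/-- The curvature map κ_λ(X,Y) = [φ_λ(X), φ_λ(Y)] - φ_λ([X,Y]). -/
def kap (l : ℝ) (X Y : Matrix (Fin 2) (Fin 2) ℂ) : Matrix (Fin 3) (Fin 3) ℂ :=
  (phiMap l X * phiMap l Y - phiMap l Y * phiMap l X) - phiMap l (X * Y - Y * X)


lemma su2_eq {X : Matrix (Fin 2) (Fin 2) ℂ} (hX : X ∈ su2) :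
    X = Xk (X 0 0).im (X 1 0) := by
  obtain ⟨h1, h2⟩ := hX
  have h00 := congrFun (congrFun h1 0) 0
  have h01 := congrFun (congrFun h1 0) 1
  simp [Matrix.conjTranspose_apply] at h00 h01
  have ht : X 0 0 + X 1 1 = 0 := by simpa [Matrix.trace, Fin.sum_univ_succ] using h2
  have hre : (X 0 0).re = 0 := by
    have := congrArg Complex.re h00; simp at this; linarith
  have hX00 : X 0 0 = Complex.I * (X 0 0).im := by
    rw [Complex.ext_iff]; constructor <;> simp [hre]
  ext i j
  fin_cases i <;> fin_cases j <;> simp [Xk]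
  · exact hX00
  · linear_combination h01
  · linear_combination ht - hX00

set_option maxHeartbeats 1000000 in
lemma phiMap_Xk (l t : ℝ) (z : ℂ) : phiMap l (Xk t z) = phiE l t z.re z.im := by
  simp [phiMap, Xk]

set_option maxHeartbeats 1000000 in
lemma bracket_Xk (t s : ℝ) (z w : ℂ) :
    Xk t z * Xk s w - Xk s w * Xk t z
      = Xk (2*(z.im*w.re - z.re*w.im)) (2*Complex.I*(s*z - t*w)) := by
  ext i j
  fin_cases i <;> fin_cases j <;>
    · simp [Xk, Matrix.mul_apply, Fin.sum_univ_succ, Complex.ext_iff]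
      constructor <;> ring

set_option maxHeartbeats 1000000 in
lemma comm_phiE (t1 u1 v1 t2 u2 v2 : ℝ) :
    phiE 1 t1 u1 v1 * phiE 1 t2 u2 v2 - phiE 1 t2 u2 v2 * phiE 1 t1 u1 v1
      = phiE 1 (2*(v1*u2 - u1*v2)) (2*(t1*v2 - t2*v1)) (2*(t2*u1 - t1*u2)) := by
  ext i j
  fin_cases i <;> fin_cases j <;>
    · simp [phiE, Matrix.mul_apply, Fin.sum_univ_succ, Real.sqrt_one, Complex.ext_iff]
      constructor <;> ring

set_option maxHeartbeats 1000000 in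
lemma kap_one (t s : ℝ) (z w : ℂ) : kap 1 (Xk t z) (Xk s w) = 0 := by
  rw [kap, bracket_Xk, phiMap_Xk, phiMap_Xk, phiMap_Xk, comm_phiE]
  have h1 : (2*Complex.I*(s*z - t*w)).re = 2*(t*w.im - s*z.im) := by
    simp [Complex.ext_iff]; try ring
  have h2 : (2*Complex.I*(s*z - t*w)).im = 2*(s*z.re - t*w.re) := by
    simp [Complex.ext_iff]; try ring
  rw [h1, h2]
  ring_nf
  exact sub_self _

lemma Xk_mem (t : ℝ) (z : ℂ) : Xk t z ∈ su2 := by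
  constructor
  · ext i j
    fin_cases i <;> fin_cases j <;> simp [Xk, Complex.ext_iff]
  · simp [Xk, Matrix.trace, Fin.sum_univ_succ]

/-- κ_λ vanishes identically if and only if λ = 1. -/
theorem stmt12 (l : ℝ) (hl : 0 < l) :
    (∀ X ∈ su2, ∀ Y ∈ su2, kap l X Y = 0) ↔ l = 1 := by
  constructor
  · intro h
    have h0 := congrFun (congrFun (h (Xk 0 1) (Xk_mem 0 1) (Xk 1 0) (Xk_mem 1 0)) 0) 1
    simp [kap, phiMap, Xk, phiE, Matrix.mul_apply, Fin.sum_univ_succ, Complex.ext_iff] at h0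
    simp only [← Complex.ofReal_ofNat, ← Complex.ofReal_one, ← Complex.ofReal_pow,
      ← Complex.ofReal_mul, ← Complex.ofReal_add, ← Complex.ofReal_sub, ← Complex.ofReal_neg,
      ← Complex.ofReal_div, Complex.ofReal_re, Complex.ofReal_im] at h0
    obtain ⟨-, h2⟩ := h0
    have hs : Real.sqrt l ^ 2 = l := Real.sq_sqrt hl.le
    have hs0 : 0 < Real.sqrt l := Real.sqrt_pos.mpr hl
    set s := Real.sqrt l with hsdef
    have hl' : l = s^2 := hs.symm
    rw [hl'] at h2
    field_simp at h2
    ring_nf at h2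
    have h10 : (0:ℝ) < s^10 := pow_pos hs0 10
    have hz : s ^ 10 * (1 - s^8) = 0 := by rw [show s ^ 8 = 1 by linarith [h2]]; ring
    have h8 : s ^ 8 = 1 := by
      rcases mul_eq_zero.mp hz with h'|h'
      · exact absurd h' h10.ne'
      · linarith
    have hle : s ≤ 1 := by
      by_contra hgt
      push_neg at hgt
      have := one_lt_pow₀ hgt (by norm_num : (8:ℕ) ≠ 0)
      linarith
    have hge : 1 ≤ s := by
      by_contra hlt
      push_neg at hlt
      have := pow_lt_one₀ hs0.le hlt (by norm_num : (8:ℕ) ≠ 0)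
      linarith
    have : s = 1 := le_antisymm hle hge
    rw [hl', this]; norm_num
  · rintro rfl X hX Y hY
    rw [su2_eq hX, su2_eq hY]
    exact kap_one _ _ _ _
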